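/- Let ℓ ≥ 1 and n ≥ 2ℓ + 1 be integers. Suppose the edges of the complete graph K_n are colored so that there is a partition of the vertex set into parts each of size at most ℓ, with every edge between two distinct parts receiving the same fixed color (say blue). Then the coloring contains a blue cycle C_{2ℓ+1}. -/

import Mathlib

open SimpleGraph

/-- The edge coloring `c` of the complete graph on `V` contains a rainbow triangle. -/
def HasRainbowTriangle {V α : Type*} (c : Sym2 V → α) : Prop :=
  ∃ x y z : V, x ≠ y ∧ x ≠ z ∧ y ≠ z ∧
    c s(x, y) ≠ c s(x, z) ∧ c s(x, y) ≠ c s(y, z) ∧ c s(x, z) ≠ c s(y, z)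

/-- The edge coloring `c` contains a copy of `H` all of whose edges have color `i`. -/
def HasMonoCopyIn {V W α : Type*} (c : Sym2 V → α) (H : SimpleGraph W) (i : α) : Prop :=
  ∃ f : W ↪ V, ∀ u v, H.Adj u v → c s(f u, f v) = i

/-- The edge coloring `c` contains a monochromatic copy of `H`. -/
def HasMonoCopy {V W α : Type*} (c : Sym2 V → α) (H : SimpleGraph W) : Prop :=
  ∃ i, HasMonoCopyIn c H i

/-- Every `k`-coloring of the edges of `K_n` contains a rainbow triangle or a
monochromatic copy of `H`. -/
def grProp {W : Type*} (k : ℕ) (H : SimpleGraph W) (n : ℕ) : Prop :=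
  ∀ c : Sym2 (Fin n) → Fin k, HasRainbowTriangle c ∨ HasMonoCopy c H

/-- The `k`-color Gallai–Ramsey number `gr_k(K₃ : H)`: the minimum `N` such that for all
`n ≥ N`, every `k`-coloring of the edges of `K_n` contains a rainbow triangle or a
monochromatic copy of `H`. -/
noncomputable def gr {W : Type*} (k : ℕ) (H : SimpleGraph W) : ℕ :=
  sInf {N | ∀ n, N ≤ n → grProp k H n}

open Finset in
theorem blue_odd_cycle_of_partition {ℓ n : ℕ} (hℓ : 1 ≤ ℓ) (hn : 2 * ℓ + 1 ≤ n)
    {α : Type*} (c : Sym2 (Fin n) → α) (blue : α)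
    (P : Finpartition (Finset.univ : Finset (Fin n)))
    (hsize : ∀ p ∈ P.parts, p.card ≤ ℓ)
    (hblue : ∀ p ∈ P.parts, ∀ q ∈ P.parts, p ≠ q →
      ∀ u ∈ p, ∀ v ∈ q, c s(u, v) = blue) :
    HasMonoCopyIn c (cycleGraph (2 * ℓ + 1)) blue := by
  set m := 2 * ℓ + 1 with hm
  -- the part of a vertex, and its min as a key
  have hpmem : ∀ v : Fin n, P.part v ∈ P.parts := fun v => P.part_mem.mpr (mem_univ v)
  have hvmem : ∀ v : Fin n, v ∈ P.part v := fun v => P.mem_part (mem_univ v)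
  have hpne : ∀ v : Fin n, (P.part v).Nonempty := fun v => ⟨v, hvmem v⟩
  set key : Fin n → Fin n := fun v => (P.part v).min' (hpne v) with hkey
  have keypart : ∀ u v : Fin n, key u = key v → P.part u = P.part v := by
    intro u v h
    have h1 : key u ∈ P.part u := min'_mem _ _
    have h2 : key v ∈ P.part v := min'_mem _ _
    rw [h] at h1
    exact P.eq_of_mem_parts (hpmem u) (hpmem v) h1 h2
  -- choose m vertices
  obtain ⟨S, -, hS⟩ := Finset.exists_subset_card_eq (s := (univ : Finset (Fin n))) (n := m) (by simpa using hn)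
  set emb : Fin n → Lex (Fin n × Fin n) := fun v => toLex (key v, v) with hemb
  have embinj : Function.Injective emb := by
    intro u v h
    have := congrArg (fun t => (ofLex t).2) h
    simpa [hemb] using this
  set T : Finset (Lex (Fin n × Fin n)) := S.image emb with hT
  have hTcard : T.card = m := by rw [hT, Finset.card_image_of_injective _ embinj, hS]
  set e := T.orderIsoOfFin hTcard with he
  set x : Fin m → Fin n := fun i => (ofLex (e i).1).2 with hx
  have hxe : ∀ i, (e i : Lex (Fin n × Fin n)) = emb (x i) := by
    intro i
    obtain ⟨v, -, hv⟩ := Finset.mem_image.mp (e i).2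
    rw [hx]; simp only
    rw [← hv]; simp [hemb]
  have xinj : Function.Injective x := by
    intro i j h
    have : (e i : Lex (Fin n × Fin n)) = e j := by rw [hxe i, hxe j, h]
    exact e.injective (Subtype.ext this)
  have xkey : ∀ i, key (x i) = (ofLex (e i).1).1 := by
    intro i; rw [hxe i]; simp [hemb]
  -- same part implies indices close
  have close : ∀ i j : Fin m, i.val ≤ j.val → P.part (x i) = P.part (x j) →
      j.val + 1 - i.val ≤ ℓ := by
    intro i j hij hpart
    have hsame : ∀ k : Fin m, i ≤ k → k ≤ j → P.part (x k) = P.part (x i) := by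
      intro k hik hkj
      have h1 : (e i : Lex (Fin n × Fin n)) ≤ e k := e.monotone hik
      have h2 : (e k : Lex (Fin n × Fin n)) ≤ e j := e.monotone hkj
      have hk1 : key (x i) ≤ key (x k) := by
        rw [xkey, xkey]; exact Prod.Lex.le_iff.mp h1 |>.elim (fun h => le_of_lt h) (fun h => le_of_eq h.1)
      have hk2 : key (x k) ≤ key (x j) := by
        rw [xkey, xkey]; exact Prod.Lex.le_iff.mp h2 |>.elim (fun h => le_of_lt h) (fun h => le_of_eq h.1)
      have hkij : key (x i) = key (x j) := by
        have : ((key (x i) : Fin n) : WithTop (Fin n)) = (key (x j) : Fin n) := by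
          simp only [hkey, Finset.coe_min', hpart]
        exact WithTop.coe_injective this
      exact keypart _ _ (le_antisymm hk2 (hkij ▸ hk1)) |>.trans hpart.symm
    have hmaps : ∀ k ∈ Finset.Icc i j, x k ∈ P.part (x i) := by
      intro k hk
      rw [Finset.mem_Icc] at hk
      rw [← hsame k hk.1 hk.2]; exact hvmem _
    have hcard : (Finset.Icc i j).card ≤ (P.part (x i)).card :=
      Finset.card_le_card_of_injOn x hmaps (fun a _ b _ h => xinj h)
    have : (Finset.Icc i j).card = j.val + 1 - i.val := by
      rw [Fin.card_Icc]  -- maybe name differs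
    exact this ▸ hcard |>.trans (hsize _ (hpmem _))
  -- rotation by ℓ+1
  have hm2 : 2 ≤ m := by omega
  haveI : NeZero m := ⟨by omega⟩
  set rot : Fin m → Fin m := fun j => ⟨((ℓ + 1) * j.val) % m, Nat.mod_lt _ (by omega)⟩
    with hrot
  have rotinj : Function.Injective rot := by
    intro i j h
    have h1 : (ℓ + 1) * i.val ≡ (ℓ + 1) * j.val [MOD m] := by
      have := congrArg Fin.val h
      simpa [hrot, Nat.ModEq] using this
    have e1 : 2 * (ℓ + 1) ≡ 1 [MOD m] := by
      show (2 * (ℓ + 1)) % m = 1 % m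
      rw [Nat.mod_eq_sub_mod (by omega)]
      congr 1
      omega
    have h3 : i.val ≡ j.val [MOD m] := by
      calc i.val = 1 * i.val := by ring
        _ ≡ 2 * (ℓ + 1) * i.val [MOD m] := e1.symm.mul_right _
        _ = 2 * ((ℓ + 1) * i.val) := by ring
        _ ≡ 2 * ((ℓ + 1) * j.val) [MOD m] := h1.mul_left 2
        _ = 2 * (ℓ + 1) * j.val := by ring
        _ ≡ 1 * j.val [MOD m] := e1.mul_right _
        _ = j.val := by ring
    have := h3
    unfold Nat.ModEq at this
    rw [Nat.mod_eq_of_lt i.isLt, Nat.mod_eq_of_lt j.isLt] at this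
    exact Fin.ext this
  have vone : (1 : Fin m).val = 1 := by rw [Fin.val_one', Nat.mod_eq_of_lt (by omega)]
  have step : ∀ u : Fin m, P.part (x (rot u)) ≠ P.part (x (rot (u + 1))) := by
    intro u heq
    set a := rot u with ha
    set b := rot (u + 1) with hb
    have hu1 : (u + 1 : Fin m).val = (u.val + 1) % m := by
      rw [Fin.val_add, vone]
    have hbval : b.val = (a.val + (ℓ + 1)) % m := by
      have c1 : (ℓ + 1) * ((u.val + 1) % m) ≡ a.val + (ℓ + 1) [MOD m] := by
        calc (ℓ + 1) * ((u.val + 1) % m) ≡ (ℓ + 1) * (u.val + 1) [MOD m] :=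
              (Nat.mod_modEq _ m).mul_left _
          _ = (ℓ + 1) * u.val + (ℓ + 1) := by ring
          _ ≡ a.val + (ℓ + 1) [MOD m] := ((Nat.mod_modEq _ m).symm).add_right _
      have : b.val = ((ℓ + 1) * ((u.val + 1) % m)) % m := by
        rw [hb, hrot]; simp only [hu1]
      rw [this]
      calc ((ℓ + 1) * ((u.val + 1) % m)) % m = (a.val + (ℓ + 1)) % m := c1
        _ = _ := rfl
    have haval : a.val < m := a.isLt
    rcases Nat.lt_or_ge (a.val + (ℓ + 1)) m with hlt | hge
    · have hb2 : b.val = a.val + (ℓ + 1) := by rw [hbval, Nat.mod_eq_of_lt hlt]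
      have := close a b (by omega) heq
      omega
    · have hb2 : b.val = a.val + (ℓ + 1) - m := by
        rw [hbval, Nat.mod_eq_sub_mod hge, Nat.mod_eq_of_lt (by omega)]
      have := close b a (by rw [hb2]; omega) heq.symm
      omega
  refine ⟨⟨fun j => x (rot j), xinj.comp rotinj⟩, ?_⟩
  intro u v hadj
  simp only [Function.Embedding.coeFn_mk]
  rw [cycleGraph_adj'] at hadj
  have key1 : ∀ u v : Fin m, v = u + 1 → c s(x (rot u), x (rot v)) = blue := by
    intro u v hv
    subst hv
    exact hblue _ (hpmem _) _ (hpmem _) (step u) _ (hvmem _) _ (hvmem _)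
  rcases hadj with h | h
  · have : u = v + 1 := by
      have h2 : u - v = 1 := Fin.ext (by rw [h, vone])
      rw [add_comm]
      exact sub_eq_iff_eq_add.mp h2
    rw [show (s(x (rot u), x (rot v)) : Sym2 (Fin n)) = s(x (rot v), x (rot u)) from Sym2.eq_swap]
    exact key1 v u this
  · have : v = u + 1 := by
      have h2 : v - u = 1 := Fin.ext (by rw [h, vone])
      rw [add_comm]
      exact sub_eq_iff_eq_add.mp h2
    exact key1 u v this
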